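/- In the bounded modular setting, let q ∈ ℝ, let the q-creation, q-annihilation operators c_ξ, a_ξ and the right operators r_ξ, r*_ξ on the algebraic Fock space F(H) be defined using the inner product ⟨·,·⟩_U, and let J_F be the conjugate-linear map on F(H) determined by J_F(Ω) = Ω and J_F(v₁⊗…⊗vₙ) = A^{-1/2}𝒥vₙ ⊗ ⋯ ⊗ A^{-1/2}𝒥v₁. Then for every ξ ∈ H_ℝ and all η₁, …, ηₙ ∈ H_ℝ (n ≥ 0), J_F(s_ξ(η₁⊗…⊗ηₙ)) = d_{A^{-1/2}ξ}(J_F(η₁⊗…⊗ηₙ)), where s_ξ = c_ξ + a_ξ and d_{A^{-1/2}ξ} = r_{A^{-1/2}ξ} + r*_{A^{-1/2}ξ}. (In particular, J_F(η₁⊗…⊗ηₙ) = A^{-1/2}ηₙ ⊗ ⋯ ⊗ A^{-1/2}η₁ for ηᵢ ∈ H_ℝ.) -/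

import Mathlib

noncomputable section

variable {H : Type*} [NormedAddCommGroup H] [InnerProductSpace ℂ H]

/-- The simple tensor `ζ 0 ⊗ ⋯ ⊗ ζ (n-1)` in the algebraic Fock space
`F(H) = ⨁ₙ H^{⊗n}`, realized as the tensor algebra (for `n = 0` this is the
vacuum vector `Ω = 1`). -/
def st (n : ℕ) (ζ : Fin n → H) : TensorAlgebra ℂ H :=
  (List.ofFn fun i => TensorAlgebra.ι ℂ (ζ i)).prod

/-- Remove the `i`-th entry from a tuple. -/
def removeNth {α : Type*} : {n : ℕ} → Fin n → (Fin n → α) → Fin (n - 1) → α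
  | 0, i, _ => i.elim0
  | _ + 1, i, ζ => fun j => ζ (i.succAbove j)

/-- `c` is the family of (left) `q`-creation operators. -/
def IsCreation (c : H → Module.End ℂ (TensorAlgebra ℂ H)) : Prop :=
  ∀ (ξ : H) (n : ℕ) (ζ : Fin n → H), c ξ (st n ζ) = st (n + 1) (Fin.cons ξ ζ)

/-- `a` is the family of (left) `q`-annihilation operators relative to the inner
product `⟨ξ, η⟩_U = 2⟨T ξ, η⟩`. -/
def IsAnnihilationU (q : ℝ) (T : H →L[ℂ] H)
    (a : H → Module.End ℂ (TensorAlgebra ℂ H)) : Prop :=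
  ∀ (ξ : H) (n : ℕ) (ζ : Fin n → H),
    a ξ (st n ζ) =
      ∑ i : Fin n,
        ((q : ℂ) ^ (i : ℕ) * (2 * (inner ℂ (T ξ) (ζ i) : ℂ))) • st (n - 1) (removeNth i ζ)

/-- `r` is the family of right `q`-creation operators. -/
def IsRightCreation (r : H → Module.End ℂ (TensorAlgebra ℂ H)) : Prop :=
  ∀ (ξ : H) (n : ℕ) (ζ : Fin n → H), r ξ (st n ζ) = st (n + 1) (Fin.snoc ζ ξ)

/-- `rs` is the family of right `q`-annihilation operators relative to the inner
product `⟨ξ, η⟩_U = 2⟨T ξ, η⟩`. -/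
def IsRightAnnihilationU (q : ℝ) (T : H →L[ℂ] H)
    (rs : H → Module.End ℂ (TensorAlgebra ℂ H)) : Prop :=
  ∀ (ξ : H) (n : ℕ) (ζ : Fin n → H),
    rs ξ (st n ζ) =
      ∑ i : Fin n,
        ((q : ℂ) ^ (n - 1 - (i : ℕ)) * (2 * (inner ℂ (T ξ) (ζ i) : ℂ))) •
          st (n - 1) (removeNth i ζ)

-- auxiliary lemmas
lemma removeNth_rev' {α : Type*} {n : ℕ} (i : Fin n) (v : Fin n → α) :
    removeNth i.rev (fun k => v k.rev) = fun j => removeNth i v j.rev := by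
  cases n with
  | zero => exact i.elim0
  | succ m =>
    funext j
    show v (i.rev.succAbove j).rev = v (i.succAbove j.rev)
    rw [Fin.rev_succAbove, Fin.rev_rev]

/-- Bounded modular setting: `J` is a conjugation, `A` a bounded positive invertible
operator with inverse `Ainv` satisfying `J A J = A⁻¹`, `B` is the positive square root
of `A⁻¹`, `T = (1 + A⁻¹)⁻¹`, and the operators `c, a, r, rs` on the algebraic Fock
space are built from the inner product `⟨ξ, η⟩_U = 2⟨T ξ, η⟩`. Let `JF` be the
conjugate-linear map on Fock space with `JF Ω = Ω` and
`JF (v₁⊗⋯⊗vₙ) = A^{-1/2}𝒥vₙ ⊗ ⋯ ⊗ A^{-1/2}𝒥v₁`. Then for `ξ ∈ H_ℝ` and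
`η₁, …, ηₙ ∈ H_ℝ` one has `JF (s_ξ (η₁⊗⋯⊗ηₙ)) = d_{A^{-1/2}ξ} (JF (η₁⊗⋯⊗ηₙ))`,
and in particular `JF (η₁⊗⋯⊗ηₙ) = A^{-1/2}ηₙ ⊗ ⋯ ⊗ A^{-1/2}η₁`. -/
theorem stmt15 {H : Type*} [NormedAddCommGroup H] [InnerProductSpace ℂ H] [CompleteSpace H]
    (J : H →ₗ⋆[ℂ] H) (hJ2 : ∀ x, J (J x) = x) (hJiso : ∀ x, ‖J x‖ = ‖x‖)
    (A Ainv B T : H →L[ℂ] H)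
    (hA : A.IsPositive) (hAinv₁ : A ∘L Ainv = 1) (hAinv₂ : Ainv ∘L A = 1)
    (hB : B.IsPositive) (hBB : B ∘L B = Ainv)
    (hJA : ∀ x, J (A x) = Ainv (J x))
    (hT₁ : T ∘L (1 + Ainv) = 1) (hT₂ : (1 + Ainv) ∘L T = 1)
    (q : ℝ) (c a r rs : H → Module.End ℂ (TensorAlgebra ℂ H))
    (hc : IsCreation c) (ha : IsAnnihilationU q T a)
    (hr : IsRightCreation r) (hrs : IsRightAnnihilationU q T rs)
    (JF : TensorAlgebra ℂ H →ₗ⋆[ℂ] TensorAlgebra ℂ H)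
    (hJF : ∀ (n : ℕ) (v : Fin n → H),
      JF (st n v) = st n fun i => B (J (v i.rev)))
    (ξ : H) (hξ : J ξ = ξ) (n : ℕ) (η : Fin n → H) (hη : ∀ i, J (η i) = η i) :
    JF ((c ξ + a ξ) (st n η)) = (r (B ξ) + rs (B ξ)) (JF (st n η)) ∧
    JF (st n η) = st n (fun i => B (η i.rev)) := by
  -- operator algebra, in the ring H →L[ℂ] H
  have hA₁ : A * Ainv = 1 := hAinv₁
  have hA₂ : Ainv * A = 1 := hAinv₂
  have hBB' : B * B = Ainv := hBB
  have hT₁' : T * (1 + Ainv) = 1 := hT₁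
  have hT₂' : (1 + Ainv) * T = 1 := hT₂
  have hBAinv : B * Ainv = Ainv * B := by
    rw [← hBB', mul_assoc]
  have hTAinv : T * Ainv = Ainv * T := by
    calc T * Ainv = T * Ainv * ((1 + Ainv) * T) := by rw [hT₂', mul_one]
      _ = T * (Ainv * (1 + Ainv)) * T := by noncomm_ring
      _ = T * ((1 + Ainv) * Ainv) * T := by noncomm_ring
      _ = (T * (1 + Ainv)) * (Ainv * T) := by noncomm_ring
      _ = Ainv * T := by rw [hT₁', one_mul]
  have hTB : T * B = B * T := by
    calc T * B = T * B * ((1 + Ainv) * T) := by rw [hT₂', mul_one]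
      _ = T * (B + B * Ainv) * T := by noncomm_ring
      _ = T * (B + Ainv * B) * T := by rw [hBAinv]
      _ = (T * (1 + Ainv)) * (B * T) := by noncomm_ring
      _ = B * T := by rw [hT₁', one_mul]
  have hS1 : (Ainv * T) * (1 + A) = 1 := by
    calc (Ainv * T) * (1 + A) = T * (Ainv * (1 + A)) := by rw [← hTAinv]; noncomm_ring
      _ = T * (Ainv + Ainv * A) := by noncomm_ring
      _ = T * (1 + Ainv) := by rw [hA₂]; noncomm_ring
      _ = 1 := hT₁'
  have hBTB : B * (T * B) = Ainv * T := by
    calc B * (T * B) = B * B * T := by rw [hTB, mul_assoc]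
      _ = Ainv * T := by rw [hBB']
  -- J-relations
  have hJAinv : ∀ x, A (J x) = J (Ainv x) := by
    intro x
    have h1 := hJA (Ainv x)
    have h2 : A (Ainv x) = x := by
      have := congrArg (fun f : H →L[ℂ] H => f x) hAinv₁
      simpa using this
    rw [h2] at h1
    have := congrArg (fun y => A y) h1
    rw [this]
    have := congrArg (fun f : H →L[ℂ] H => f (J (Ainv x))) hAinv₁
    simpa using this
  have hJT : ∀ x, J (T x) = (Ainv * T) (J x) := by
    intro x
    have h1 : (Ainv * T) ((1 + A) (J (T x))) = J (T x) := by
      have := congrArg (fun f : H →L[ℂ] H => f (J (T x))) hS1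
      simpa using this
    have h2 : (1 + A) (J (T x)) = J x := by
      have h3 : ((1 : H →L[ℂ] H) + A) (J (T x)) = J (T x) + A (J (T x)) := by
        simp [ContinuousLinearMap.add_apply]
      rw [h3, hJAinv, ← map_add]
      congr 1
      have := congrArg (fun f : H →L[ℂ] H => f x) hT₂
      simpa using this
    rw [← h1, h2]
  -- J is antiunitary
  have hconj : ∀ x y : H, (inner ℂ (J x) (J y) : ℂ) = starRingEnd ℂ (inner ℂ x y : ℂ) := by
    intro x y
    have hI : (RCLike.I : ℂ) = Complex.I := by simp
    have e1 : J x + J y = J (x + y) := (map_add J x y).symm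
    have e2 : J x - J y = J (x - y) := (map_sub J x y).symm
    have e3 : J x - Complex.I • J y = J (x + Complex.I • y) := by
      rw [map_add, map_smulₛₗ, Complex.conj_I, neg_smul, ← sub_eq_add_neg]
    have e4 : J x + Complex.I • J y = J (x - Complex.I • y) := by
      rw [map_sub, map_smulₛₗ, Complex.conj_I, neg_smul, sub_neg_eq_add]
    rw [inner_eq_sum_norm_sq_div_four (𝕜 := ℂ), inner_eq_sum_norm_sq_div_four (𝕜 := ℂ), hI]
    rw [e1, e2, e3, e4, hJiso, hJiso, hJiso, hJiso]
    rw [map_div₀, map_add, map_sub, map_mul, map_sub, map_pow, map_pow, map_pow, map_pow]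
    simp only [Complex.conj_ofReal, RCLike.conj_ofReal, Complex.conj_I, map_ofNat]
    ring
  -- self-adjointness of B
  have hBadj : ∀ x y : H, (inner ℂ (B x) y : ℂ) = inner ℂ x (B y) := by
    intro x y
    have hB' : ContinuousLinearMap.adjoint B = B :=
      ContinuousLinearMap.isSelfAdjoint_iff'.mp hB.isSelfAdjoint
    calc (inner ℂ (B x) y : ℂ) = inner ℂ ((ContinuousLinearMap.adjoint B) x) y := by rw [hB']
      _ = inner ℂ x (B y) := ContinuousLinearMap.adjoint_inner_left B y x
  -- the key scalar identity
  have hkey : ∀ x y : H, J x = x → J y = y →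
      starRingEnd ℂ (inner ℂ (T x) y : ℂ) = (inner ℂ (T (B x)) (B y) : ℂ) := by
    intro x y hx hy
    have l1 : starRingEnd ℂ (inner ℂ (T x) y : ℂ) = inner ℂ ((Ainv * T) x) y := by
      rw [← hconj, hJT, hx, hy]
    have l2 : (inner ℂ (T (B x)) (B y) : ℂ) = inner ℂ ((Ainv * T) x) y := by
      rw [← hBadj]
      congr 1
      have := congrArg (fun f : H →L[ℂ] H => f x) hBTB
      simpa using this
    rw [l1, l2]
  -- second conjunct
  have h2 : JF (st n η) = st n fun i => B (η i.rev) := by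
    rw [hJF]
    simp only [hη]
  refine ⟨?_, h2⟩
  -- tuple lemma for removed entries
  have hrm : ∀ i : Fin n, (fun j => B (J (removeNth i η j.rev)))
      = removeNth i.rev (fun k : Fin n => B (η k.rev)) := by
    intro i
    cases n with
    | zero => exact i.elim0
    | succ m =>
      rw [removeNth_rev' i (fun k => B (η k))]
      funext j
      show B (J (η (i.succAbove j.rev))) = B (η (i.succAbove j.rev))
      rw [hη]
  have hLadd : (c ξ + a ξ) (st n η) = c ξ (st n η) + a ξ (st n η) := rfl
  have hRadd : (r (B ξ) + rs (B ξ)) (JF (st n η))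
      = r (B ξ) (JF (st n η)) + rs (B ξ) (JF (st n η)) := rfl
  rw [hLadd, hRadd, map_add, h2, hr, hrs]
  congr 1
  · -- creation part
    rw [hc, hJF]
    refine congrArg (st (n + 1)) (funext fun i => ?_)
    cases i using Fin.lastCases with
    | last => simp [Fin.rev_last, hξ]
    | cast j => simp [Fin.rev_castSucc, hη]
  · -- annihilation part
    rw [ha, map_sum]
    refine Fintype.sum_equiv Fin.revPerm _ _ ?_
    intro i
    show JF (((q : ℂ) ^ (i : ℕ) * (2 * (inner ℂ (T ξ) (η i) : ℂ))) • st (n - 1) (removeNth i η))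
      = ((q : ℂ) ^ (n - 1 - ((i.rev : Fin n) : ℕ)) * (2 * (inner ℂ (T (B ξ)) (B (η i.rev.rev)) : ℂ))) •
          st (n - 1) (removeNth i.rev (fun k : Fin n => B (η k.rev)))
    rw [map_smulₛₗ, hJF, hrm i, Fin.rev_rev]
    congr 1
    have hexp : n - 1 - ((i.rev : Fin n) : ℕ) = (i : ℕ) := by
      have h1 := Fin.val_rev i
      have h2 := i.isLt
      omega
    rw [hexp, map_mul, map_mul, map_pow, Complex.conj_ofReal, map_ofNat,
      hkey ξ (η i) hξ (hη i)]
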